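/- Every involution x in the Paige loop over F₂ is contained in a subloop isomorphic to the symmetric group S₃; equivalently, for every involution x there exists an involution y with xy of order 3. -/
import Mathlib


/-- Zorn vector matrices over the field with two elements. -/
structure Zorn2 where
  a : ZMod 2
  alpha : Fin 3 → ZMod 2
  beta : Fin 3 → ZMod 2
  b : ZMod 2

namespace Zorn2

/-- Standard dot product on `F₂³`. -/
def zdot (u v : Fin 3 → ZMod 2) : ZMod 2 := u 0 * v 0 + u 1 * v 1 + u 2 * v 2

/-- Standard cross product on `F₂³`. -/
def zcross (u v : Fin 3 → ZMod 2) : Fin 3 → ZMod 2 :=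
  ![u 1 * v 2 - u 2 * v 1, u 2 * v 0 - u 0 * v 2, u 0 * v 1 - u 1 * v 0]

/-- Zorn's vector matrix multiplication. -/
instance : Mul Zorn2 :=
  ⟨fun x y =>
    { a := x.a * y.a + zdot x.alpha y.beta
      alpha := fun i => x.a * y.alpha i + x.alpha i * y.b - zcross x.beta y.beta i
      beta := fun i => x.beta i * y.a + x.b * y.beta i + zcross x.alpha y.alpha i
      b := zdot x.beta y.alpha + x.b * y.b }⟩

instance : One Zorn2 := ⟨{ a := 1, alpha := fun _ => 0, beta := fun _ => 0, b := 1 }⟩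

instance : Add Zorn2 :=
  ⟨fun x y => { a := x.a + y.a, alpha := x.alpha + y.alpha,
                beta := x.beta + y.beta, b := x.b + y.b }⟩

/-- Determinant (norm) of a Zorn vector matrix. -/
def det (x : Zorn2) : ZMod 2 := x.a * x.b - zdot x.alpha x.beta

/-- `x` has multiplicative order 2. -/
def ord2 (x : Zorn2) : Prop := x * x = 1 ∧ x ≠ 1

/-- `x` has multiplicative order 3. -/
def ord3 (x : Zorn2) : Prop := x * (x * x) = 1 ∧ x * x ≠ 1 ∧ x ≠ 1

end Zorn2


namespace Zorn2

def toProd (x : Zorn2) : ZMod 2 × (Fin 3 → ZMod 2) × (Fin 3 → ZMod 2) × ZMod 2 :=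
  (x.a, x.alpha, x.beta, x.b)

def equivProd : Zorn2 ≃ ZMod 2 × (Fin 3 → ZMod 2) × (Fin 3 → ZMod 2) × ZMod 2 where
  toFun := toProd
  invFun p := ⟨p.1, p.2.1, p.2.2.1, p.2.2.2⟩
  left_inv x := rfl
  right_inv p := rfl

instance : DecidableEq Zorn2 := equivProd.injective.decidableEq

instance (x : Zorn2) : Decidable (ord2 x) := by unfold ord2; infer_instance
instance (x : Zorn2) : Decidable (ord3 x) := by unfold ord3; infer_instance

instance : Fintype Zorn2 := Fintype.ofEquiv _ equivProd.symm

end Zorn2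

open Zorn2 in
set_option maxRecDepth 100000 in
set_option maxHeartbeats 4000000 in
lemma stmt9_aux : ∀ x : Zorn2, Zorn2.det x = 1 → Zorn2.ord2 x →
    ∃ y : Zorn2, Zorn2.det y = 1 ∧ Zorn2.ord2 y ∧ Zorn2.ord3 (x * y) := by
  decide

open Zorn2 in
theorem stmt9 (x : Zorn2) (hdx : Zorn2.det x = 1) (hx2 : Zorn2.ord2 x) :
    ∃ y : Zorn2, Zorn2.det y = 1 ∧ Zorn2.ord2 y ∧ Zorn2.ord3 (x * y) := by
  exact stmt9_aux x hdx hx2
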